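/- Consider the postprocessed Euler scheme applied to the Ornstein–Uhlenbeck equation: X_{n+1} = X_n − γh(X_n + (1/2)σ√h ξ_n) + σ√h ξ_n with deterministic X_0 = x, and X̄_n := X_n + (1/2)σ√h ξ_n. If 0 < γh < 2, then lim_{n→∞} E(X̄_n²) = σ²/(2γ), i.e. the postprocessed scheme has no bias in sampling the stationary second moment of the Ornstein–Uhlenbeck process, for every stable stepsize h. -/

import Mathlib

open MeasureTheory ProbabilityTheory Filter Topology

open Real
open scoped ENNReal NNReal

lemma myint_sq_exp : Integrable (fun x : ℝ => x ^ 2 * Real.exp (-(1/2) * x ^ 2)) := by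
  have := integrable_rpow_mul_exp_neg_mul_sq (b := 1/2) (by norm_num) (s := 2) (by norm_num)
  have h2 : ∀ x : ℝ, x ^ (2:ℝ) = x ^ 2 := fun x => by
    rw [show (2:ℝ) = ((2:ℕ):ℝ) by norm_num, Real.rpow_natCast]
  simpa [h2] using this

lemma myint_x_exp : Integrable (fun x : ℝ => x * Real.exp (-(1/2) * x ^ 2)) := by
  have := integrable_rpow_mul_exp_neg_mul_sq (b := 1/2) (by norm_num) (s := 1) (by norm_num)
  simpa using this

lemma myint_odd : ∫ x : ℝ, x * Real.exp (-(1/2) * x ^ 2) = 0 := by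
  have h := (Measure.measurePreserving_neg (volume : Measure ℝ)).integral_comp
    (Homeomorph.neg ℝ).measurableEmbedding (fun x : ℝ => x * Real.exp (-(1/2) * x ^ 2))
  simp only [neg_sq, neg_mul, integral_neg] at h
  simp only [neg_mul]
  linarith

lemma myint_parts : ∫ x : ℝ, x ^ 2 * Real.exp (-(1/2) * x ^ 2) = Real.sqrt (2 * π) := by
  have hderiv : ∀ x : ℝ, HasDerivAt (fun y : ℝ => -Real.exp (-(1/2) * y ^ 2))
      (x * Real.exp (-(1/2) * x ^ 2)) x := by
    intro x
    have h1 : HasDerivAt (fun y : ℝ => -(1/2) * y ^ 2) (-(1/2) * (2 * x ^ 1)) x :=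
      (hasDerivAt_pow 2 x).const_mul _
    have h2 := h1.exp.neg
    exact h2.congr_deriv (by ring)
  have hu : ∀ x : ℝ, HasDerivAt (fun y : ℝ => y) 1 x := fun x => hasDerivAt_id x
  have e1 : (fun y : ℝ => y) * (fun y : ℝ => y * Real.exp (-(1/2) * y ^ 2))
      = fun x : ℝ => x ^ 2 * Real.exp (-(1/2) * x ^ 2) := by funext x; simp [Pi.mul_apply]; ring
  have e2 : (fun _ : ℝ => (1:ℝ)) * (fun y : ℝ => -Real.exp (-(1/2) * y ^ 2))
      = fun x : ℝ => -Real.exp (-(1/2) * x ^ 2) := by funext x; simp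
  have e3 : (fun y : ℝ => y) * (fun y : ℝ => -Real.exp (-(1/2) * y ^ 2))
      = fun x : ℝ => -(x * Real.exp (-(1/2) * x ^ 2)) := by funext x; simp [Pi.mul_apply]
  have key := integral_mul_deriv_eq_deriv_mul_of_integrable (fun x _ => hu x) (fun x _ => hderiv x)
    (by rw [e1]; exact myint_sq_exp) (by rw [e2]; exact (integrable_exp_neg_mul_sq (by norm_num : (0:ℝ) < 1/2)).neg)
    (by rw [e3]; exact myint_x_exp.neg)
  simp only [one_mul, integral_neg, neg_neg] at key
  rw [show (fun x : ℝ => x * (x * Real.exp (-(1/2) * x ^ 2))) = fun x : ℝ => x ^ 2 * Real.exp (-(1/2) * x ^ 2) from funext fun x => by ring] at key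
  rw [key, integral_gaussian]
  rw [show π / (1/2) = 2 * π by ring]

lemma mypdf_eq (x : ℝ) :
    gaussianPDFReal 0 1 x = (Real.sqrt (2 * π))⁻¹ * Real.exp (-(1/2) * x ^ 2) := by
  rw [gaussianPDFReal]
  norm_num
  left
  ring_nf

lemma mypdf_meas : Measurable fun x : ℝ => (gaussianPDFReal 0 1 x).toNNReal :=
  (measurable_gaussianPDFReal 0 1).real_toNNReal

lemma mygauss_eq : gaussianReal 0 1
    = (volume : Measure ℝ).withDensity (fun x => ((gaussianPDFReal 0 1 x).toNNReal : ℝ≥0∞)) := by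
  rw [gaussianReal_of_var_ne_zero 0 one_ne_zero]
  rfl

lemma mygauss_integral (g : ℝ → ℝ) :
    ∫ x, g x ∂(gaussianReal 0 1) = ∫ x, gaussianPDFReal 0 1 x * g x := by
  rw [mygauss_eq, integral_withDensity_eq_integral_smul mypdf_meas g]
  congr 1
  funext x
  simp [NNReal.smul_def, Real.coe_toNNReal _ (gaussianPDFReal_nonneg 0 1 x)]

lemma mygauss_integrable (g : ℝ → ℝ)
    (hg : Integrable (fun x => gaussianPDFReal 0 1 x * g x)) :
    Integrable g (gaussianReal 0 1) := by
  rw [mygauss_eq, integrable_withDensity_iff_integrable_smul mypdf_meas]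
  refine hg.congr (ae_of_all _ fun x => ?_)
  simp [NNReal.smul_def, Real.coe_toNNReal _ (gaussianPDFReal_nonneg 0 1 x)]

lemma sqrt_two_pi_pos : (0:ℝ) < Real.sqrt (2 * π) :=
  Real.sqrt_pos.mpr (by positivity)

lemma mygauss_int_id : ∫ x, x ∂(gaussianReal 0 1) = 0 := by
  rw [mygauss_integral]
  rw [show (fun x : ℝ => gaussianPDFReal 0 1 x * x)
      = fun x : ℝ => (Real.sqrt (2 * π))⁻¹ * (x * Real.exp (-(1/2) * x ^ 2)) from
    funext fun x => by simp only [mypdf_eq]; ring]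
  rw [integral_const_mul, myint_odd, mul_zero]

lemma mygauss_int_sq : ∫ x, x ^ 2 ∂(gaussianReal 0 1) = 1 := by
  rw [mygauss_integral]
  rw [show (fun x : ℝ => gaussianPDFReal 0 1 x * x ^ 2)
      = fun x : ℝ => (Real.sqrt (2 * π))⁻¹ * (x ^ 2 * Real.exp (-(1/2) * x ^ 2)) from
    funext fun x => by simp only [mypdf_eq]; ring]
  rw [integral_const_mul, myint_parts, inv_mul_cancel₀ sqrt_two_pi_pos.ne']

lemma mygauss_integrable_id : Integrable (fun x : ℝ => x) (gaussianReal 0 1) := by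
  refine mygauss_integrable _ ?_
  refine (myint_x_exp.const_mul (Real.sqrt (2 * π))⁻¹).congr (ae_of_all _ fun x => ?_)
  simp only [mypdf_eq]; ring

lemma mygauss_integrable_sq : Integrable (fun x : ℝ => x ^ 2) (gaussianReal 0 1) := by
  refine mygauss_integrable _ ?_
  refine (myint_sq_exp.const_mul (Real.sqrt (2 * π))⁻¹).congr (ae_of_all _ fun x => ?_)
  simp only [mypdf_eq]; ring

/-- The postprocessed Euler scheme applied to the Ornstein–Uhlenbeck
equation, `X_{n+1} = X_n - γh (X_n + ½σ√h ξ_n) + σ√h ξ_n`, `X̄_n = X_n + ½σ√h ξ_n`,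
with deterministic `X_0 = x`, i.i.d. standard Gaussian `ξ_n` and `0 < γh < 2`, satisfies
`lim_{n→∞} E(X̄_n²) = σ²/(2γ)`: no bias in the stationary second moment for every stable
stepsize. -/
theorem postprocessed_euler_OU_exact_second_moment
    {Ω : Type*} [MeasurableSpace Ω] (μ : Measure Ω) [IsProbabilityMeasure μ]
    (γ σ h : ℝ) (hγ : 0 < γ) (hσ : 0 < σ) (hh : 0 < h) (hstab : γ * h < 2)
    (ξ : ℕ → Ω → ℝ) (hmeas : ∀ n, Measurable (ξ n))
    (hindep : iIndepFun ξ μ)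
    (hgauss : ∀ n, μ.map (ξ n) = gaussianReal 0 1)
    (x : ℝ) (X : ℕ → Ω → ℝ) (hX0 : X 0 = fun _ => x)
    (hrec : ∀ n ω, X (n + 1) ω
      = X n ω - γ * h * (X n ω + 1 / 2 * σ * Real.sqrt h * ξ n ω) + σ * Real.sqrt h * ξ n ω)
    (Xbar : ℕ → Ω → ℝ)
    (hXbar : ∀ n ω, Xbar n ω = X n ω + 1 / 2 * σ * Real.sqrt h * ξ n ω) :
    Tendsto (fun n => ∫ ω, (Xbar n ω) ^ 2 ∂μ) atTop (𝓝 (σ ^ 2 / (2 * γ))) := by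
  set a : ℝ := 1 - γ * h with ha_def
  set b : ℝ := σ * Real.sqrt h * (1 - γ * h / 2) with hb_def
  set c : ℝ := 1 / 2 * σ * Real.sqrt h with hc_def
  have hrec' : ∀ n ω, X (n + 1) ω = a * X n ω + b * ξ n ω := by
    intro n ω; rw [hrec]; simp only [ha_def, hb_def]; ring
  -- Gaussian transfer
  have hξint : ∀ n, Integrable (ξ n) μ := by
    intro n
    have h1 : Integrable (fun y : ℝ => y) (μ.map (ξ n)) := by
      rw [hgauss n]; exact mygauss_integrable_id
    exact (integrable_map_measure (by rw [hgauss n]; exact aestronglyMeasurable_id)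
      (hmeas n).aemeasurable).mp h1
  have hξsq : ∀ n, Integrable (fun ω => ξ n ω ^ 2) μ := by
    intro n
    have h1 : Integrable (fun y : ℝ => y ^ 2) (μ.map (ξ n)) := by
      rw [hgauss n]; exact mygauss_integrable_sq
    exact (integrable_map_measure (by
        rw [hgauss n]
        exact (measurable_id.pow_const 2).aestronglyMeasurable)
      (hmeas n).aemeasurable).mp h1
  have hξE : ∀ n, ∫ ω, ξ n ω ∂μ = 0 := by
    intro n
    have h1 : ∫ y : ℝ, y ∂(μ.map (ξ n)) = ∫ ω, ξ n ω ∂μ :=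
      integral_map (hmeas n).aemeasurable aestronglyMeasurable_id
    rw [hgauss n] at h1
    rw [← h1]; exact mygauss_int_id
  have hξE2 : ∀ n, ∫ ω, ξ n ω ^ 2 ∂μ = 1 := by
    intro n
    have h1 : ∫ y : ℝ, y ^ 2 ∂(μ.map (ξ n)) = ∫ ω, ξ n ω ^ 2 ∂μ :=
      integral_map (hmeas n).aemeasurable (measurable_id.pow_const 2).aestronglyMeasurable
    rw [hgauss n] at h1
    rw [← h1]; exact mygauss_int_sq
  have hξmem : ∀ n, MemLp (ξ n) 2 μ := fun n =>
    (memLp_two_iff_integrable_sq (hmeas n).aestronglyMeasurable).mpr (hξsq n)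
  -- representation of X n as a function of ξ_0, ..., ξ_{n-1}
  have hrep : ∀ n, ∃ g : ({i // i ∈ Finset.range n} → ℝ) → ℝ,
      Measurable g ∧ ∀ ω, X n ω = g (fun i => ξ i ω) := by
    intro n
    induction n with
    | zero => exact ⟨fun _ => x, measurable_const, fun ω => by rw [hX0]⟩
    | succ n ih =>
      obtain ⟨g, hg, hgX⟩ := ih
      refine ⟨fun v => a * g (fun i =>
          v ⟨i.1, Finset.mem_range.mpr (Nat.lt_succ_of_lt (Finset.mem_range.mp i.2))⟩)
          + b * v ⟨n, Finset.self_mem_range_succ n⟩, ?_, ?_⟩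
      · exact ((hg.comp (measurable_pi_lambda _ fun i =>
          measurable_pi_apply _)).const_mul a).add (by fun_prop)
      · intro ω; rw [hrec' n ω, hgX ω]
  have hindepXξ : ∀ n, IndepFun (X n) (ξ n) μ := by
    intro n
    obtain ⟨g, hg, hgX⟩ := hrep n
    have hd : Disjoint (Finset.range n) ({n} : Finset ℕ) := by
      simp [Finset.disjoint_singleton_right]
    have h1 := (hindep.indepFun_finset (Finset.range n) {n} hd hmeas).comp hg
      (measurable_pi_apply (⟨n, Finset.mem_singleton_self n⟩ : (({n} : Finset ℕ) : Type)))
    have hXn : X n = fun ω => g (fun i => ξ i ω) := funext hgX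
    rw [hXn]
    exact h1
  -- moments of X n
  have hmemX : ∀ n, MemLp (X n) 2 μ := by
    intro n
    induction n with
    | zero => rw [hX0]; exact memLp_const x
    | succ n ih =>
      rw [funext (hrec' n)]
      exact (ih.const_mul a).add ((hξmem n).const_mul b)
  have hintX : ∀ n, Integrable (X n) μ := fun n => (hmemX n).integrable one_le_two
  have hintX2 : ∀ n, Integrable (fun ω => X n ω ^ 2) μ := fun n =>
    (memLp_two_iff_integrable_sq (hmemX n).aestronglyMeasurable).mp (hmemX n)
  have hintXξ : ∀ n, Integrable (fun ω => X n ω * ξ n ω) μ := fun n =>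
    (hindepXξ n).integrable_mul (hintX n) (hξint n)
  have hEXξ : ∀ n, ∫ ω, X n ω * ξ n ω ∂μ = (∫ ω, X n ω ∂μ) * ∫ ω, ξ n ω ∂μ := fun n =>
    (hindepXξ n).integral_mul_eq_mul_integral (hintX n).aestronglyMeasurable (hξint n).aestronglyMeasurable
  have hEX2 : ∀ n, ∫ ω, X n ω ^ 2 ∂μ
      = (a ^ 2) ^ n * x ^ 2 + b ^ 2 * ∑ k ∈ Finset.range n, (a ^ 2) ^ k := by
    intro n
    induction n with
    | zero => rw [hX0]; simp
    | succ n ih =>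
      have e : (fun ω => X (n + 1) ω ^ 2) = fun ω =>
          a ^ 2 * X n ω ^ 2 + 2 * a * b * (X n ω * ξ n ω) + b ^ 2 * ξ n ω ^ 2 :=
        funext fun ω => by rw [hrec' n ω]; ring
      have IA : Integrable (fun ω => a ^ 2 * X n ω ^ 2) μ := (hintX2 n).const_mul _
      have IB : Integrable (fun ω => 2 * a * b * (X n ω * ξ n ω)) μ := (hintXξ n).const_mul _
      have IC : Integrable (fun ω => b ^ 2 * ξ n ω ^ 2) μ := (hξsq n).const_mul _
      have IAB : Integrable (fun ω => a ^ 2 * X n ω ^ 2 + 2 * a * b * (X n ω * ξ n ω)) μ :=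
        IA.add IB
      rw [e, integral_add IAB IC, integral_add IA IB,
        integral_const_mul, integral_const_mul, integral_const_mul,
        hEXξ n, hξE n, hξE2 n, ih, geom_sum_succ]
      ring
  -- second moment of Xbar n
  have hbar : ∀ n, ∫ ω, Xbar n ω ^ 2 ∂μ = (∫ ω, X n ω ^ 2 ∂μ) + c ^ 2 := by
    intro n
    have e : (fun ω => Xbar n ω ^ 2) = fun ω =>
        X n ω ^ 2 + 2 * c * (X n ω * ξ n ω) + c ^ 2 * ξ n ω ^ 2 :=
      funext fun ω => by rw [hXbar n ω]; simp only [hc_def]; ring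
    have IB : Integrable (fun ω => 2 * c * (X n ω * ξ n ω)) μ := (hintXξ n).const_mul _
    have IC : Integrable (fun ω => c ^ 2 * ξ n ω ^ 2) μ := (hξsq n).const_mul _
    have IAB : Integrable (fun ω => X n ω ^ 2 + 2 * c * (X n ω * ξ n ω)) μ :=
      (hintX2 n).add IB
    rw [e, integral_add IAB IC, integral_add (hintX2 n) IB,
      integral_const_mul, integral_const_mul, hEXξ n, hξE n, hξE2 n]
    ring
  have hfin : (fun n => ∫ ω, Xbar n ω ^ 2 ∂μ) = fun n =>
      ((a ^ 2) ^ n * x ^ 2 + b ^ 2 * ∑ k ∈ Finset.range n, (a ^ 2) ^ k) + c ^ 2 :=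
    funext fun n => by rw [hbar n, hEX2 n]
  rw [hfin]
  -- convergence
  have hgh : 0 < γ * h := mul_pos hγ hh
  have ha2 : a ^ 2 < 1 := by nlinarith [mul_pos hgh (by linarith : (0:ℝ) < 2 - γ * h)]
  have h1 : Tendsto (fun n => (a ^ 2) ^ n) atTop (𝓝 0) :=
    tendsto_pow_atTop_nhds_zero_of_lt_one (sq_nonneg a) ha2
  have h2 : Tendsto (fun n => ∑ k ∈ Finset.range n, (a ^ 2) ^ k) atTop (𝓝 (1 - a ^ 2)⁻¹) :=
    (hasSum_geometric_of_lt_one (sq_nonneg a) ha2).tendsto_sum_nat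
  have hT : Tendsto (fun n => ((a ^ 2) ^ n * x ^ 2
      + b ^ 2 * ∑ k ∈ Finset.range n, (a ^ 2) ^ k) + c ^ 2) atTop
      (𝓝 ((0 * x ^ 2 + b ^ 2 * (1 - a ^ 2)⁻¹) + c ^ 2)) :=
    ((h1.mul_const (x ^ 2)).add (h2.const_mul (b ^ 2))).add tendsto_const_nhds
  have hval : (0 * x ^ 2 + b ^ 2 * (1 - a ^ 2)⁻¹) + c ^ 2 = σ ^ 2 / (2 * γ) := by
    have hs : Real.sqrt h ^ 2 = h := Real.sq_sqrt hh.le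
    have h1a : 1 - a ^ 2 = γ * h * (2 - γ * h) := by simp only [ha_def]; ring
    have hb2 : b ^ 2 = σ ^ 2 * h * (1 - γ * h / 2) ^ 2 := by
      rw [hb_def, mul_pow, mul_pow, hs]
    have hc2 : c ^ 2 = σ ^ 2 * h / 4 := by
      rw [hc_def, mul_pow, mul_pow, hs]; ring
    have hd : γ * h * (2 - γ * h) ≠ 0 :=
      ne_of_gt (mul_pos hgh (by linarith))
    rw [h1a, hb2, hc2]
    field_simp
    ring
  rw [hval] at hT
  exact hT
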